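/- Under the assumptions that the dual problem max{θ(λ,μ) : μ ≥ 0, λ = Ay − b, y ∈ Aff(Y)} attains optimal value f*, Slater's condition holds with y₀ ∈ ri(Y), g(y₀) ≤ −κ𝟙, Ay₀ = b, and for any ε-optimal dual solution (λ(ε), μ(ε)) and any point ȳ ∈ Y with Aȳ − b = z(ε) := −(ρ*/‖λ(ε)‖)λ(ε) (or z(ε)=0 if λ(ε)=0) and ‖ȳ − y₀‖ ≤ r ≤ κ/(2L(g)): θ(λ(ε), μ(ε)) ≤ f(y₀) + L(f)·r − ρ*‖λ(ε)‖ − (κ/2)‖μ(ε)‖₁. -/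

import Mathlib

open Matrix Classical
open scoped RealInnerProductSpace

/-- Key inequality in the proof of the ε-optimal dual norm bound: for a dual
point (λ(ε), μ(ε)) and the point ȳ ∈ Y realizing z(ε) = −(ρ*/‖λ(ε)‖)λ(ε),
θ(λ(ε), μ(ε)) ≤ f(y₀) + L(f)·r − ρ*‖λ(ε)‖ − (κ/2)‖μ(ε)‖₁. -/
theorem stmt_11 {n q p : ℕ}
    (Y : Set (EuclideanSpace ℝ (Fin n))) (hYcl : IsClosed Y) (hYconv : Convex ℝ Y)
    (A : Matrix (Fin q) (Fin n) ℝ) (b : Fin q → ℝ)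
    (f : EuclideanSpace ℝ (Fin n) → ℝ)
    (g : EuclideanSpace ℝ (Fin n) → Fin p → ℝ)
    (hfconv : ConvexOn ℝ Y f)
    (Lf : ℝ) (hLf : 0 ≤ Lf)
    (hflip : ∀ y₁ ∈ Y, ∀ y₂ ∈ Y, |f y₁ - f y₂| ≤ Lf * ‖y₁ - y₂‖)
    (hgconv : ∀ i, ConvexOn ℝ Y (fun y => g y i))
    (Lg : ℝ) (hLg : 0 < Lg)
    (hglip : ∀ i, ∀ y₁ ∈ Y, ∀ y₂ ∈ Y, |g y₁ i - g y₂ i| ≤ Lg * ‖y₁ - y₂‖)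
    -- Slater condition:
    (κ : ℝ) (hκ : 0 < κ)
    (y₀ : EuclideanSpace ℝ (Fin n)) (hy₀ : y₀ ∈ intrinsicInterior ℝ Y)
    (hy₀g : ∀ i, g y₀ i ≤ -κ) (hy₀A : A *ᵥ y₀ = b)
    (r : ℝ) (hr : 0 < r) (hrκ : r ≤ κ / (2 * Lg))
    (ρstar : ℝ) (hρstar : 0 < ρstar)
    -- (λ(ε), μ(ε)) is a feasible dual point:
    (lam : EuclideanSpace ℝ (Fin q)) (mu : Fin p → ℝ) (hmu : 0 ≤ mu)
    (hlamfeas : ∃ y ∈ (affineSpan ℝ Y : Set (EuclideanSpace ℝ (Fin n))),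
      lam = (A *ᵥ y - b : Fin q → ℝ))
    -- θ(λ(ε), μ(ε)) is the value of the dual function at (λ(ε), μ(ε)):
    (θval : ℝ)
    (hθ : IsGLB {v : ℝ | ∃ y ∈ Y, v = f y + lam ⬝ᵥ (A *ᵥ y - b) + mu ⬝ᵥ g y} θval)
    -- ȳ ∈ Y with Aȳ − b = z(ε) and ‖ȳ − y₀‖ ≤ r:
    (ybar : EuclideanSpace ℝ (Fin n)) (hybarY : ybar ∈ Y)
    (hybarr : ‖ybar - y₀‖ ≤ r)
    (hybarz : (A *ᵥ ybar - b : Fin q → ℝ) =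
      (if lam = 0 then 0 else -(ρstar / ‖lam‖) • lam : EuclideanSpace ℝ (Fin q))) :
    θval ≤ f y₀ + Lf * r - ρstar * ‖lam‖ - (κ / 2) * (∑ i, |mu i|) := by

  have hy₀Y : y₀ ∈ Y := intrinsicInterior_subset hy₀
  have h1 : θval ≤ f ybar + lam ⬝ᵥ (A *ᵥ ybar - b) + mu ⬝ᵥ g ybar :=
    hθ.1 ⟨ybar, hybarY, rfl⟩
  have hf : f ybar ≤ f y₀ + Lf * r := by
    have := hflip ybar hybarY y₀ hy₀Y
    have h2 : f ybar - f y₀ ≤ Lf * ‖ybar - y₀‖ := (abs_le.mp this).2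
    have h3 : Lf * ‖ybar - y₀‖ ≤ Lf * r := by
      apply mul_le_mul_of_nonneg_left hybarr hLf
    linarith
  have hdot : lam ⬝ᵥ (A *ᵥ ybar - b) = -(ρstar * ‖lam‖) := by
    rw [hybarz]
    by_cases hl : lam = 0
    · simp [hl]
    · simp only [hl, if_neg, ite_false]
      have hll : lam ⬝ᵥ ((-(ρstar / ‖lam‖) • lam : EuclideanSpace ℝ (Fin q)) : Fin q → ℝ)
          = -(ρstar / ‖lam‖) * (lam ⬝ᵥ lam) := by
        simp only [dotProduct, PiLp.smul_apply, smul_eq_mul, neg_mul, neg_div,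
          Finset.sum_neg_distrib, neg_mul_comm, mul_neg]
        rw [neg_inj, Finset.mul_sum]
        exact Finset.sum_congr rfl fun i _ => by ring
      rw [hll]
      have hinner : lam ⬝ᵥ lam = ‖lam‖ ^ 2 := by
        rw [← real_inner_self_eq_norm_sq]
        simp only [dotProduct, PiLp.inner_apply, RCLike.inner_apply, conj_trivial, mul_comm]
      rw [hinner]
      have hn : ‖lam‖ ≠ 0 := norm_ne_zero_iff.mpr hl
      field_simp
  have hg : mu ⬝ᵥ g ybar ≤ -((κ / 2) * (∑ i, |mu i|)) := by
    have hgb : ∀ i, g ybar i ≤ -(κ/2) := by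
      intro i
      have := hglip i ybar hybarY y₀ hy₀Y
      have h2 : g ybar i - g y₀ i ≤ Lg * ‖ybar - y₀‖ := (abs_le.mp this).2
      have h3 : Lg * ‖ybar - y₀‖ ≤ Lg * r := mul_le_mul_of_nonneg_left hybarr hLg.le
      have h4 : Lg * r ≤ κ / 2 := by
        calc Lg * r ≤ Lg * (κ / (2 * Lg)) := mul_le_mul_of_nonneg_left hrκ hLg.le
          _ = κ / 2 := by field_simp
      have := hy₀g i
      linarith
    have hsum : ∑ i, |mu i| = ∑ i, mu i := by
      refine Finset.sum_congr rfl fun i _ => abs_of_nonneg (hmu i)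
    rw [hsum]
    have : mu ⬝ᵥ g ybar ≤ ∑ i, mu i * (-(κ/2)) := by
      apply Finset.sum_le_sum
      intro i _
      exact mul_le_mul_of_nonneg_left (hgb i) (hmu i)
    calc mu ⬝ᵥ g ybar ≤ ∑ i, mu i * (-(κ/2)) := this
      _ = -((κ / 2) * ∑ i, mu i) := by rw [← Finset.sum_mul]; ring
  linarith
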